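/- Let α ∈ (−π, π) with α ≠ 0, let β = π, let M be an n×n non-diagonal Hermitian unitary modularly permutation-symmetric complex matrix with |M_{jj}| = r, |M_{jℓ}| = t > 0 (j ≠ ℓ), d = r/t, and let U = exp(i(α+β)/2)·( cos((α−β)/2)·I + i·sin((α−β)/2)·M ). Then for every real k > 0 and all indices j ≠ ℓ, the ratio ρ(k) = |S(k)_{jj}|² / |S(k)_{jℓ}|² satisfies ρ(k) = d² + (d² + n − 1)·tan²(α/2)·(1/k²) (generalized δ-coupling). -/

import Mathlib

open Matrix Real

theorem stmt_16 (n : ℕ) (α β : ℝ)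
    (hα : α ∈ Set.Ioo (-π) π) (hα0 : α ≠ 0) (hβ : β = π)
    (M : Matrix (Fin n) (Fin n) ℂ)
    (hM : M.IsHermitian) (hMu : M ∈ Matrix.unitaryGroup (Fin n) ℂ)
    (hnd : ¬ M.IsDiag)
    (r t : ℝ) (ht0 : 0 < t)
    (hr : ∀ j, norm (M j j) = r)
    (ht : ∀ j l, j ≠ l → norm (M j l) = t)
    (d : ℝ) (hd : d = r / t)
    (U : Matrix (Fin n) (Fin n) ℂ)
    (hU : U = Complex.exp (Complex.I * ((α + β) / 2)) •
        ((Real.cos ((α - β) / 2) : ℂ) • (1 : Matrix (Fin n) (Fin n) ℂ) +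
          (Complex.I * (Real.sin ((α - β) / 2) : ℂ)) • M)) :
    ∀ k : ℝ, 0 < k → ∀ j l : Fin n, j ≠ l →
      norm (((((k : ℂ) - 1) • U + ((k : ℂ) + 1) • (1 : Matrix (Fin n) (Fin n) ℂ))⁻¹ *
            (((k : ℂ) + 1) • U + ((k : ℂ) - 1) • (1 : Matrix (Fin n) (Fin n) ℂ))) j j) ^ 2 /
          norm (((((k : ℂ) - 1) • U + ((k : ℂ) + 1) • (1 : Matrix (Fin n) (Fin n) ℂ))⁻¹ *
            (((k : ℂ) + 1) • U + ((k : ℂ) - 1) • (1 : Matrix (Fin n) (Fin n) ℂ))) j l) ^ 2 =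
        d ^ 2 + (d ^ 2 + n - 1) * Real.tan (α / 2) ^ 2 * (1 / k ^ 2) := by
  subst hβ
  intro k hk j l hjl
  -- basic trig facts
  have hcos : 0 < Real.cos (α / 2) := by
    apply Real.cos_pos_of_mem_Ioo
    constructor <;> [linarith [hα.1]; linarith [hα.2]]
  set τ : ℝ := Real.tan (α / 2) with hτdef
  have hCval : Real.cos ((α - π) / 2) = Real.sin (α / 2) := by
    rw [show (α - π)/2 = α/2 - π/2 by ring, Real.cos_sub_pi_div_two]
  have hSval : Real.sin ((α - π) / 2) = -Real.cos (α / 2) := by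
    rw [show (α - π)/2 = α/2 - π/2 by ring, Real.sin_sub_pi_div_two]
  obtain ⟨C, hCdef⟩ : ∃ C : ℝ, Real.cos ((α - π) / 2) = C := ⟨_, rfl⟩
  obtain ⟨Sn, hSdef⟩ : ∃ Sn : ℝ, Real.sin ((α - π) / 2) = Sn := ⟨_, rfl⟩
  rw [hCdef] at hCval; rw [hSdef] at hSval
  have hSne : Sn ≠ 0 := by rw [hSval]; exact neg_ne_zero.mpr (ne_of_gt hcos)
  have hCS : C^2 + Sn^2 = 1 := by
    rw [hCval, hSval]; linear_combination Real.sin_sq_add_cos_sq (α/2)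
  have hCτS : C = -τ * Sn := by
    rw [hCval, hSval, hτdef, Real.tan_eq_sin_div_cos]
    field_simp
  -- M is an involution
  have hstar : star M = M := hM
  have hM2 : M * M = 1 := by
    have h1 := (Matrix.mem_unitaryGroup_iff).mp hMu
    rwa [hstar] at h1
  -- row-norm identity
  have hone : r^2 + ((n:ℝ) - 1) * t^2 = 1 := by
    have hdiag : (M * M) j j = 1 := by rw [hM2]; simp
    have hsum : (∑ i : Fin n, ((Complex.normSq (M j i) : ℂ))) = 1 := by
      rw [← hdiag, Matrix.mul_apply]
      refine Finset.sum_congr rfl fun i _ => ?_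
      have h5 : M i j = (starRingEnd ℂ) (M j i) := by
        conv_lhs => rw [← hstar]
        simp [Matrix.star_apply]
      rw [h5, Complex.mul_conj]
    have hsum' : (∑ i : Fin n, Complex.normSq (M j i)) = 1 := by
      exact_mod_cast hsum
    have hterm : ∀ i : Fin n, Complex.normSq (M j i) = if i = j then r^2 else t^2 := by
      intro i
      rw [← Complex.sq_norm]
      by_cases hij : i = j
      · subst hij; rw [hr i, if_pos rfl]
      · rw [ht j i (fun h => hij h.symm), if_neg hij]
    rw [Finset.sum_congr rfl (fun i _ => hterm i)] at hsum'
    rw [← Finset.add_sum_erase _ _ (Finset.mem_univ j), if_pos rfl] at hsum'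
    have hrest : (∑ i ∈ Finset.univ.erase j, if i = j then r^2 else t^2) = ((n:ℝ) - 1) * t^2 := by
      rw [Finset.sum_congr rfl (fun i hi => if_neg (Finset.mem_erase.mp hi).1)]
      rw [Finset.sum_const, Finset.card_erase_of_mem (Finset.mem_univ j), Finset.card_univ,
        Fintype.card_fin, nsmul_eq_mul]
      have hn1 : 1 ≤ n := j.pos
      rw [Nat.cast_sub hn1]
      norm_num
    rw [hrest] at hsum'
    exact hsum'
  -- abbreviations
  rw [hCdef, hSdef] at hU
  obtain ⟨E, hEdef⟩ : ∃ E : ℂ, Complex.exp (Complex.I * (((α:ℂ) + (π:ℂ)) / 2)) = E := ⟨_, rfl⟩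
  have hEne : E ≠ 0 := hEdef ▸ Complex.exp_ne_zero _
  have habsE : norm E = 1 := by
    rw [← hEdef, Complex.norm_exp]
    have h6 : (Complex.I * (((α:ℂ) + (π:ℂ)) / 2)).re = 0 := by simp
    rw [h6, Real.exp_zero]
  have hkey : 1 + E^2 = -2 * E * (C:ℂ) := by
    obtain ⟨w, hw⟩ : ∃ w : ℂ, Complex.exp (Complex.I * ((α:ℝ)/2 : ℝ)) = w := ⟨_, rfl⟩
    obtain ⟨w', hw'⟩ : ∃ w' : ℂ, Complex.exp (-(Complex.I * ((α:ℝ)/2 : ℝ))) = w' := ⟨_, rfl⟩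
    have hww' : w * w' = 1 := by
      rw [← hw, ← hw', ← Complex.exp_add]
      simp
    have hE : E = w * Complex.I := by
      rw [← hEdef, ← hw, show Complex.I * (((α:ℂ) + (π:ℂ))/2) = Complex.I * (((α:ℝ)/2 : ℝ) : ℂ) +
        (π/2 : ℝ) * Complex.I by push_cast; ring, Complex.exp_add]
      congr 1
      rw [Complex.exp_mul_I]
      simp
    have hwcs : w = Complex.cos ((α:ℂ)/2) + Complex.sin ((α:ℂ)/2) * Complex.I := by
      rw [← hw, show Complex.I * (((α:ℝ)/2 : ℝ) : ℂ) = ((α:ℂ)/2) * Complex.I by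
        push_cast; ring, Complex.exp_mul_I]
    have hCc2 : (C:ℂ) = Complex.sin ((α:ℂ)/2) := by
      rw [hCval, Complex.ofReal_sin]
      congr 1
      push_cast
      ring
    rw [hE, hwcs, hCc2]
    linear_combination (Complex.sin ((α:ℂ)/2)^2 * Complex.I^2 + Complex.cos ((α:ℂ)/2)^2 +
        Complex.sin ((α:ℂ)/2)^2 + 2*Complex.cos ((α:ℂ)/2)*Complex.sin ((α:ℂ)/2)*Complex.I) *
        Complex.I_sq - Complex.sin_sq_add_cos_sq ((α:ℂ)/2)
  have hCSc : (C:ℂ)^2 + (Sn:ℂ)^2 = 1 := by exact_mod_cast congrArg (fun x : ℝ => (x:ℂ)) hCS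
  obtain ⟨a, hadef⟩ : ∃ a : ℂ, E * (C:ℂ) = a := ⟨_, rfl⟩
  obtain ⟨b, hbdef⟩ : ∃ b : ℂ, E * (Complex.I * (Sn:ℂ)) = b := ⟨_, rfl⟩
  have hbne : b ≠ 0 := by
    rw [← hbdef]
    exact mul_ne_zero hEne (mul_ne_zero Complex.I_ne_zero (Complex.ofReal_ne_zero.mpr hSne))
  have hUab : U = a • (1 : Matrix (Fin n) (Fin n) ℂ) + b • M := by
    rw [hU, hEdef, smul_add, smul_smul, smul_smul, hadef, hbdef]
  obtain ⟨x, hxdef⟩ : ∃ x : ℂ, ((k:ℂ) - 1) * a + ((k:ℂ) + 1) = x := ⟨_, rfl⟩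
  obtain ⟨y, hydef⟩ : ∃ y : ℂ, ((k:ℂ) - 1) * b = y := ⟨_, rfl⟩
  obtain ⟨u, hudef⟩ : ∃ u : ℂ, ((k:ℂ) + 1) * a + ((k:ℂ) - 1) = u := ⟨_, rfl⟩
  obtain ⟨v, hvdef⟩ : ∃ v : ℂ, ((k:ℂ) + 1) * b = v := ⟨_, rfl⟩
  have hA : ((k:ℂ) - 1) • U + ((k:ℂ) + 1) • (1 : Matrix (Fin n) (Fin n) ℂ)
      = x • (1 : Matrix (Fin n) (Fin n) ℂ) + y • M := by
    rw [hUab, smul_add, smul_smul, smul_smul, ← hxdef, ← hydef]; module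
  have hB : ((k:ℂ) + 1) • U + ((k:ℂ) - 1) • (1 : Matrix (Fin n) (Fin n) ℂ)
      = u • (1 : Matrix (Fin n) (Fin n) ℂ) + v • M := by
    rw [hUab, smul_add, smul_smul, smul_smul, ← hudef, ← hvdef]; module
  have hkne : (k:ℂ) ≠ 0 := Complex.ofReal_ne_zero.mpr (ne_of_gt hk)
  have hunit : ∀ z : ℂ, norm z = 1 → ((k:ℂ) + 1) + ((k:ℂ) - 1) * z ≠ 0 := by
    intro z hz h0
    have h1 : ((k:ℂ) + 1) = -(((k:ℂ) - 1) * z) := by linear_combination h0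
    have h2 : norm ((k:ℂ) + 1) = norm ((k:ℂ) - 1) * norm z := by
      rw [h1, norm_neg]
      exact norm_mul _ _
    rw [hz, mul_one] at h2
    have e1 : ((k:ℂ) + 1) = ((k + 1 : ℝ) : ℂ) := by push_cast; ring
    have e2 : ((k:ℂ) - 1) = ((k - 1 : ℝ) : ℂ) := by push_cast; ring
    rw [e1, e2, Complex.norm_real, Complex.norm_real, Real.norm_eq_abs, Real.norm_eq_abs] at h2
    rw [abs_of_pos (by linarith)] at h2
    rcases abs_cases (k - 1) with ⟨h3, _⟩ | ⟨h3, _⟩ <;> rw [h3] at h2 <;> linarith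
  have habs1 : norm (a + b) = 1 := by
    have h7 : a + b = E * ((C:ℂ) + (Sn:ℂ) * Complex.I) := by rw [← hadef, ← hbdef]; ring
    rw [h7, norm_mul, habsE, one_mul, Complex.norm_add_mul_I, hCS, Real.sqrt_one]
  have habs2 : norm (a - b) = 1 := by
    have h7 : a - b = E * ((C:ℂ) + ((-Sn : ℝ) : ℂ) * Complex.I) := by
      rw [← hadef, ← hbdef]; push_cast; ring
    rw [h7, norm_mul, habsE, one_mul, Complex.norm_add_mul_I,
      show C^2 + (-Sn)^2 = C^2 + Sn^2 by ring, hCS, Real.sqrt_one]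
  have hxy1 : x + y ≠ 0 := by
    rw [← hxdef, ← hydef, show (((k:ℂ)-1)*a + ((k:ℂ)+1)) + ((k:ℂ)-1)*b
      = ((k:ℂ)+1) + ((k:ℂ)-1)*(a+b) by ring]
    exact hunit _ habs1
  have hxy2 : x - y ≠ 0 := by
    rw [← hxdef, ← hydef, show (((k:ℂ)-1)*a + ((k:ℂ)+1)) - ((k:ℂ)-1)*b
      = ((k:ℂ)+1) + ((k:ℂ)-1)*(a-b) by ring]
    exact hunit _ habs2
  obtain ⟨Δ, hΔdef⟩ : ∃ Δ : ℂ, x^2 - y^2 = Δ := ⟨_, rfl⟩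
  have hΔne : Δ ≠ 0 := by
    rw [← hΔdef, show x^2 - y^2 = (x + y) * (x - y) by ring]
    exact mul_ne_zero hxy1 hxy2
  -- product formula for matrices of the form p•1 + q•M
  have ringM : ∀ p q s w : ℂ, (p • (1 : Matrix (Fin n) (Fin n) ℂ) + q • M) *
      (s • (1 : Matrix (Fin n) (Fin n) ℂ) + w • M)
      = (p*s + q*w) • (1 : Matrix (Fin n) (Fin n) ℂ) + (p*w + q*s) • M := by
    intro p q s w
    simp only [Matrix.add_mul, Matrix.mul_add, Matrix.smul_mul, Matrix.mul_smul,
      Matrix.one_mul, Matrix.mul_one, hM2, smul_smul]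
    module
  -- inverse of A
  have hinv : (((k:ℂ) - 1) • U + ((k:ℂ) + 1) • (1 : Matrix (Fin n) (Fin n) ℂ))⁻¹
      = Δ⁻¹ • (x • (1 : Matrix (Fin n) (Fin n) ℂ) + (-y) • M) := by
    apply Matrix.inv_eq_right_inv
    rw [hA, Matrix.mul_smul, ringM]
    rw [show x*x + y*(-y) = Δ by rw [← hΔdef]; ring, show x*(-y) + y*x = 0 by ring,
      zero_smul, add_zero, smul_smul, inv_mul_cancel₀ hΔne, one_smul]
  obtain ⟨P, hPdef⟩ : ∃ P : ℂ, x * u + (-y) * v = P := ⟨_, rfl⟩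
  obtain ⟨Q, hQdef⟩ : ∃ Q : ℂ, x * v + (-y) * u = Q := ⟨_, rfl⟩
  have hSmat : (((k:ℂ) - 1) • U + ((k:ℂ) + 1) • (1 : Matrix (Fin n) (Fin n) ℂ))⁻¹ *
      (((k:ℂ) + 1) • U + ((k:ℂ) - 1) • (1 : Matrix (Fin n) (Fin n) ℂ))
      = Δ⁻¹ • (P • (1 : Matrix (Fin n) (Fin n) ℂ) + Q • M) := by
    rw [hinv, hB, Matrix.smul_mul, ringM, hPdef, hQdef]
  -- key scalar identities
  have hQval : Q = 4 * (k:ℂ) * b := by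
    rw [← hQdef, ← hxdef, ← hydef, ← hudef, ← hvdef]; ring
  have hQne : Q ≠ 0 := by
    rw [hQval]
    exact mul_ne_zero (mul_ne_zero (by norm_num) hkne) hbne
  have hPval : P = 4 * a := by
    rw [← hPdef, ← hxdef, ← hydef, ← hudef, ← hvdef, ← hadef, ← hbdef]
    linear_combination (-(((k:ℂ)^2 - 1) * E^2 * (Sn:ℂ)^2)) * Complex.I_sq
      + (((k:ℂ)^2 - 1) * E^2) * hCSc + ((k:ℂ)^2 - 1) * hkey
  obtain ⟨μ, hμdef⟩ : ∃ μ : ℝ, τ / k = μ := ⟨_, rfl⟩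
  have hμk : μ * k = τ := by rw [← hμdef]; field_simp
  have hPQ : P = ((μ:ℂ) * Complex.I) * Q := by
    rw [hPval, hQval, ← hadef, ← hbdef]
    have hCc : (C:ℂ) = -(τ:ℂ) * (Sn:ℂ) := by exact_mod_cast congrArg (fun x : ℝ => (x:ℂ)) hCτS
    have hμkc : (μ:ℂ) * (k:ℂ) = (τ:ℂ) := by exact_mod_cast congrArg (fun x : ℝ => (x:ℂ)) hμk
    rw [hCc]
    linear_combination (-(4 * (μ:ℂ) * (k:ℂ) * E * (Sn:ℂ))) * Complex.I_sq
      + (4 * E * (Sn:ℂ)) * hμkc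
  -- diagonal entry is real
  have hρ : M j j = (((M j j).re : ℝ) : ℂ) := by
    have h8 : (starRingEnd ℂ) (M j j) = M j j := by
      have h8' := congrFun (congrFun hM j) j
      rwa [Matrix.conjTranspose_apply] at h8'
    exact (Complex.conj_eq_iff_re.mp h8).symm
  obtain ⟨ρ, hρdef⟩ : ∃ ρ : ℝ, (M j j).re = ρ := ⟨_, rfl⟩
  rw [hρdef] at hρ
  have hρ2 : ρ^2 = r^2 := by
    have h9 : |ρ| = r := by rw [← hr j, hρ, Complex.norm_real, Real.norm_eq_abs]
    rw [← sq_abs, h9]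
  -- compute the entries
  have hjj : (((((k : ℂ) - 1) • U + ((k : ℂ) + 1) • (1 : Matrix (Fin n) (Fin n) ℂ))⁻¹ *
      (((k : ℂ) + 1) • U + ((k : ℂ) - 1) • (1 : Matrix (Fin n) (Fin n) ℂ))) j j)
      = (Δ⁻¹ * Q) * ((ρ:ℂ) + (μ:ℂ) * Complex.I) := by
    rw [hSmat, Matrix.smul_apply, Matrix.add_apply, Matrix.smul_apply, Matrix.smul_apply,
      Matrix.one_apply_eq, hρ, smul_eq_mul, smul_eq_mul, smul_eq_mul, hPQ]
    ring
  have hjlE : (((((k : ℂ) - 1) • U + ((k : ℂ) + 1) • (1 : Matrix (Fin n) (Fin n) ℂ))⁻¹ *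
      (((k : ℂ) + 1) • U + ((k : ℂ) - 1) • (1 : Matrix (Fin n) (Fin n) ℂ))) j l)
      = (Δ⁻¹ * Q) * M j l := by
    rw [hSmat, Matrix.smul_apply, Matrix.add_apply, Matrix.smul_apply, Matrix.smul_apply,
      Matrix.one_apply_ne hjl, smul_eq_mul, smul_eq_mul, smul_eq_mul]
    ring
  have hG : norm (Δ⁻¹ * Q) ≠ 0 := by
    simp only [ne_eq, norm_eq_zero]
    exact mul_ne_zero (inv_ne_zero hΔne) hQne
  have e1 : norm ((Δ⁻¹ * Q) * ((ρ:ℂ) + (μ:ℂ) * Complex.I))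
      = norm (Δ⁻¹ * Q) * Real.sqrt (ρ^2 + μ^2) := by
    rw [norm_mul, Complex.norm_add_mul_I]
  have e2 : norm ((Δ⁻¹ * Q) * M j l) = norm (Δ⁻¹ * Q) * t := by
    rw [norm_mul, ht j l hjl]
  rw [hjj, hjlE, e1, e2, mul_pow, mul_pow, Real.sq_sqrt (by positivity)]
  rw [mul_div_mul_left _ _ (pow_ne_zero 2 hG)]
  -- final arithmetic
  rw [hd, ← hμk]
  have hkne' : k ≠ 0 := ne_of_gt hk
  have htne : t ≠ 0 := ne_of_gt ht0
  field_simp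
  linear_combination hρ2 - μ^2 * hone
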